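/- If (g,≺) is a maximally delayed gflow of (G,I,O), then the second layer satisfies V₁^≺ = { u ∈ V∖O : ∃K ⊆ O∖I, Odd(K) ∩ (V∖O) = {u} }. -/

import Mathlib

open Set

variable {V : Type*}

def oddN (G : SimpleGraph V) (K : Set V) : Set V :=
  {u | Odd {v | v ∈ K ∧ G.Adj u v}.ncard}

def IsSPO (lt : V → V → Prop) : Prop :=
  (∀ a, ¬ lt a a) ∧ (∀ a b c, lt a b → lt b c → lt a c)

def IsCausalFlow (G : SimpleGraph V) (I O : Set V) (g : V → V) (lt : V → V → Prop) : Prop :=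
  IsSPO lt ∧ (∀ i, i ∉ O → g i ∉ I) ∧ (∀ i, i ∉ O → lt i (g i)) ∧
  (∀ i, i ∉ O → ∀ j, G.Adj (g i) j → j = i ∨ lt i j) ∧
  (∀ i, i ∉ O → G.Adj (g i) i)

def IsGFlow (G : SimpleGraph V) (I O : Set V) (g : V → Set V) (lt : V → V → Prop) : Prop :=
  IsSPO lt ∧ (∀ i, i ∉ O → (g i).Nonempty ∧ g i ∩ I = ∅) ∧
  (∀ i, i ∉ O → ∀ j ∈ g i, lt i j) ∧
  (∀ i, i ∉ O → ∀ j ∈ oddN G (g i), j = i ∨ lt i j) ∧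
  (∀ i, i ∉ O → i ∈ oddN G (g i))

def maxSet (lt : V → V → Prop) (X : Set V) : Set V :=
  {u ∈ X | ∀ v ∈ X, ¬ lt u v}

def rest (lt : V → V → Prop) : ℕ → Set V
  | 0 => Set.univ
  | k+1 => rest lt k \ maxSet lt (rest lt k)

def layer (lt : V → V → Prop) (k : ℕ) : Set V := maxSet lt (rest lt k)

def cumul (lt : V → V → Prop) (k : ℕ) : Set V := Set.univ \ rest lt (k+1)

def MoreDelayed (lt lt' : V → V → Prop) : Prop :=
  (∀ k, (cumul lt' k).ncard ≤ (cumul lt k).ncard) ∧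
  ∃ k, (cumul lt' k).ncard < (cumul lt k).ncard

noncomputable def flowDepth (lt : V → V → Prop) : ℕ := sInf {d | layer lt (d+1) = ∅}

def MaxDelayedCausalFlow (G : SimpleGraph V) (I O : Set V) (g : V → V) (lt : V → V → Prop) : Prop :=
  IsCausalFlow G I O g lt ∧
  ∀ g' lt', IsCausalFlow G I O g' lt' → ¬ MoreDelayed lt' lt

def MaxDelayedGFlow (G : SimpleGraph V) (I O : Set V) (g : V → Set V) (lt : V → V → Prop) : Prop :=
  IsGFlow G I O g lt ∧
  ∀ g' lt', IsGFlow G I O g' lt' → ¬ MoreDelayed lt' lt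

/-! ### Auxiliary lemmas -/

theorem maxSet_nonempty [Fintype V] {lt : V → V → Prop} (h : IsSPO lt)
    {X : Set V} (hX : X.Nonempty) : (maxSet lt X).Nonempty := by
  haveI : IsTrans V (Function.swap lt) := ⟨fun a b c hab hbc => h.2 _ _ _ hbc hab⟩
  haveI : IsIrrefl V (Function.swap lt) := ⟨fun a => h.1 a⟩
  obtain ⟨a, haX, hmin⟩ :=
    (Finite.wellFounded_of_trans_of_irrefl (Function.swap lt)).has_min X hX
  exact ⟨a, haX, fun v hv hlt => hmin v hv hlt⟩

theorem rest_antitone {lt : V → V → Prop} : ∀ {j k : ℕ}, j ≤ k → rest lt k ⊆ rest lt j := by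
  intro j k hjk
  induction k with
  | zero => rw [Nat.le_zero.mp hjk]
  | succ k ih =>
    rcases Nat.eq_or_lt_of_le hjk with he | hl
    · rw [he]
    · exact fun v hv => ih (Nat.lt_succ_iff.mp hl) hv.1

theorem rest_card [Fintype V] {lt : V → V → Prop} (h : IsSPO lt) :
    ∀ k, (rest lt k).Nonempty → k + (rest lt k).ncard ≤ Fintype.card V := by
  intro k
  induction k with
  | zero => intro _; simp [rest, Set.ncard_univ]
  | succ k ih =>
    intro hne
    have hk : (rest lt k).Nonempty := Set.Nonempty.mono (rest_antitone (Nat.le_succ k)) hne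
    obtain ⟨a, ha⟩ := maxSet_nonempty h hk
    have hlt : (rest lt (k+1)).ncard < (rest lt k).ncard := by
      apply Set.ncard_lt_ncard _ (Set.toFinite _)
      rw [Set.ssubset_iff_of_subset (rest_antitone (Nat.le_succ k))]
      exact ⟨a, ha.1, fun hmem => hmem.2 ha⟩
    have := ih hk
    omega

theorem rest_empty [Fintype V] {lt : V → V → Prop} (h : IsSPO lt) :
    rest lt (Fintype.card V + 1) = ∅ := by
  by_contra hne
  have hne' : (rest lt (Fintype.card V + 1)).Nonempty := Set.nonempty_iff_ne_empty.mpr hne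
  have h1 := rest_card h (Fintype.card V + 1) hne'
  have h2 : 0 < (rest lt (Fintype.card V + 1)).ncard :=
    (Set.ncard_pos (Set.toFinite _)).mpr hne'
  omega

/-- The layer index of a vertex. -/
noncomputable def rk (lt : V → V → Prop) (v : V) : ℕ := sInf {k | v ∉ rest lt (k+1)}

theorem rk_spec [Fintype V] {lt : V → V → Prop} (h : IsSPO lt) (v : V) :
    v ∉ rest lt (rk lt v + 1) := by
  have hm : Fintype.card V ∈ {k | v ∉ rest lt (k+1)} := by
    simp only [Set.mem_setOf_eq, rest_empty h]
    exact Set.notMem_empty v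
  exact Nat.sInf_mem ⟨_, hm⟩

theorem mem_rest_rk {lt : V → V → Prop} (v : V) : v ∈ rest lt (rk lt v) := by
  rcases Nat.eq_zero_or_pos (rk lt v) with h0 | hp
  · rw [h0]; exact Set.mem_univ v
  · by_contra hn
    have h2 : rk lt v ≤ rk lt v - 1 := Nat.sInf_le (by
      show v ∉ rest lt (rk lt v - 1 + 1)
      rwa [Nat.sub_add_cancel hp])
    omega

theorem mem_layer_rk [Fintype V] {lt : V → V → Prop} (h : IsSPO lt) (v : V) :
    v ∈ layer lt (rk lt v) := by
  by_contra hn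
  exact rk_spec h v ⟨mem_rest_rk v, hn⟩

theorem rk_le_iff [Fintype V] {lt : V → V → Prop} (h : IsSPO lt) {v : V} {k : ℕ} :
    rk lt v ≤ k ↔ v ∉ rest lt (k+1) := by
  constructor
  · intro hle hmem
    exact rk_spec h v (rest_antitone (by omega) hmem)
  · intro hnm; exact Nat.sInf_le hnm

theorem rk_eq_of_mem_layer [Fintype V] {lt : V → V → Prop} (h : IsSPO lt) {v : V} {k : ℕ}
    (hv : v ∈ layer lt k) : rk lt v = k := by
  have h1 : v ∈ rest lt k := hv.1
  have h2 : rk lt v ≤ k := Nat.sInf_le (fun hmem => hmem.2 hv)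
  rcases Nat.eq_or_lt_of_le h2 with he | hlt
  · exact he
  · exact absurd (rest_antitone (Nat.succ_le_of_lt hlt) h1) (rk_spec h v)

theorem rk_lt_of_lt [Fintype V] {lt : V → V → Prop} (h : IsSPO lt) {v w : V}
    (hvw : lt v w) : rk lt w < rk lt v := by
  by_contra hn
  push_neg at hn
  have hw : w ∈ rest lt (rk lt v) := rest_antitone hn (mem_rest_rk w)
  exact (mem_layer_rk h v).2 w hw hvw

theorem mem_cumul_iff [Fintype V] {lt : V → V → Prop} (h : IsSPO lt) {v : V} {k : ℕ} :
    v ∈ cumul lt k ↔ rk lt v ≤ k := by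
  rw [rk_le_iff h]
  exact ⟨fun hv => hv.2, fun hv => ⟨Set.mem_univ v, hv⟩⟩

/-! ### Rank-induced orders -/

theorem rankOrder_spo (r : V → ℕ) : IsSPO (fun a b => r b < r a) :=
  ⟨fun a => lt_irrefl _, fun a b c hab hbc => lt_trans hbc hab⟩

theorem rankOrder_rest (r : V → ℕ) :
    ∀ k (v : V), v ∈ rest (fun a b => r b < r a) (k+1) → k < r v := by
  intro k
  induction k with
  | zero =>
    intro v hv
    by_contra hn
    push_neg at hn
    exact hv.2 ⟨Set.mem_univ v, fun w _ hw => by omega⟩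
  | succ k ih =>
    intro v hv
    have h1 : k < r v := ih v hv.1
    by_contra hn
    push_neg at hn
    exact hv.2 ⟨hv.1, fun w hw hlt => by have := ih w hw; omega⟩

theorem rankOrder_cumul (r : V → ℕ) {k : ℕ} {v : V} (hv : r v ≤ k) :
    v ∈ cumul (fun a b => r b < r a) k :=
  ⟨Set.mem_univ v, fun hmem => absurd (rankOrder_rest r k v hmem) (by omega)⟩

theorem moreDelayed_of_rank [Fintype V] {lt : V → V → Prop} (h : IsSPO lt) (r : V → ℕ)
    (hr : ∀ v, r v ≤ rk lt v) (u : V) (k0 : ℕ) (hu1 : r u ≤ k0) (hu2 : k0 < rk lt u) :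
    MoreDelayed (fun a b => r b < r a) lt := by
  have hsub : ∀ k, cumul lt k ⊆ cumul (fun a b => r b < r a) k := fun k v hv =>
    rankOrder_cumul r (le_trans (hr v) ((mem_cumul_iff h).mp hv))
  constructor
  · intro k; exact Set.ncard_le_ncard (hsub k) (Set.toFinite _)
  · refine ⟨k0, ?_⟩
    apply Set.ncard_lt_ncard _ (Set.toFinite _)
    rw [Set.ssubset_iff_of_subset (hsub k0)]
    exact ⟨u, rankOrder_cumul r hu1,
      fun hmem => absurd ((mem_cumul_iff h).mp hmem) (by omega)⟩

theorem layer_zero_eq [Fintype V] {G : SimpleGraph V} {I O : Set V} {g : V → Set V}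
    {lt : V → V → Prop} (h : MaxDelayedGFlow G I O g lt) : layer lt 0 = O := by
  classical
  obtain ⟨⟨hspo, hg1, hg2, hg3, hg4⟩, hmax⟩ := h
  apply Set.Subset.antisymm
  · intro v hv
    by_contra hvO
    obtain ⟨j, hj⟩ := (hg1 v hvO).1
    exact hv.2 j (Set.mem_univ j) (hg2 v hvO j hj)
  · intro v hvO
    by_contra hv
    have hrk : rk lt v ≠ 0 := fun h0 => hv (h0 ▸ mem_layer_rk hspo v)
    set r : V → ℕ := fun w => if w ∈ O then 0 else rk lt w with hr
    have hrle : ∀ w, r w ≤ rk lt w := by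
      intro w; simp only [hr]; split <;> omega
    have hflow : IsGFlow G I O g (fun a b => r b < r a) := by
      refine ⟨rankOrder_spo r, hg1, ?_, ?_, hg4⟩
      · intro i hiO j hj
        have ha := hrle j
        have hb : rk lt j < rk lt i := rk_lt_of_lt hspo (hg2 i hiO j hj)
        have hc : r i = rk lt i := by simp [hr, hiO]
        omega
      · intro i hiO j hj
        rcases hg3 i hiO j hj with he | hlt
        · exact Or.inl he
        · refine Or.inr ?_
          have ha := hrle j
          have hb := rk_lt_of_lt hspo hlt
          have hc : r i = rk lt i := by simp [hr, hiO]
          omega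
    exact hmax g _ hflow
      (moreDelayed_of_rank hspo r hrle v 0 (by simp [hr, hvO]) (by omega))

theorem max_delayed_gflow_layer_one {V : Type*} [Fintype V] (G : SimpleGraph V)
    (I O : Set V) (g : V → Set V) (lt : V → V → Prop)
    (h : MaxDelayedGFlow G I O g lt) :
    layer lt 1 = {u | u ∉ O ∧ ∃ K ⊆ O \ I, oddN G K ∩ Oᶜ = {u}} := by
  classical
  have hO := layer_zero_eq h
  obtain ⟨⟨hspo, hg1, hg2, hg3, hg4⟩, hmax⟩ := h
  have hrkO : ∀ v ∈ O, rk lt v = 0 := by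
    intro v hv
    rw [← hO] at hv
    exact rk_eq_of_mem_layer hspo hv
  have hOrk : ∀ v : V, rk lt v = 0 → v ∈ O := by
    intro v hv
    rw [← hO]
    exact hv ▸ mem_layer_rk hspo v
  ext u
  simp only [Set.mem_setOf_eq]
  constructor
  · intro hu
    have hrku : rk lt u = 1 := rk_eq_of_mem_layer hspo hu
    have huO : u ∉ O := fun hmem => by have := hrkO u hmem; omega
    refine ⟨huO, g u, ?_, ?_⟩
    · intro j hj
      have hlt := hg2 u huO j hj
      have h1 : rk lt j < 1 := hrku ▸ rk_lt_of_lt hspo hlt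
      refine ⟨hOrk j (by omega), ?_⟩
      intro hjI
      have h2 := (hg1 u huO).2
      exact Set.eq_empty_iff_forall_notMem.mp h2 j ⟨hj, hjI⟩
    · ext j
      simp only [Set.mem_inter_iff, Set.mem_compl_iff, Set.mem_singleton_iff]
      constructor
      · rintro ⟨hjodd, hjO⟩
        rcases hg3 u huO j hjodd with he | hlt
        · exact he
        · exfalso
          have h1 : rk lt j < 1 := hrku ▸ rk_lt_of_lt hspo hlt
          exact hjO (hOrk j (by omega))
      · rintro rfl
        exact ⟨hg4 _ huO, huO⟩
  · rintro ⟨huO, K, hKsub, hKodd⟩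
    have hrk0 : rk lt u ≠ 0 := fun h0 => huO (hOrk u h0)
    by_contra hu
    have hrk1 : rk lt u ≠ 1 := fun h1 => hu (h1 ▸ mem_layer_rk hspo u)
    have hrk2 : 2 ≤ rk lt u := by omega
    have huodd : u ∈ oddN G K := by
      have : u ∈ oddN G K ∩ Oᶜ := by rw [hKodd]; exact Set.mem_singleton u
      exact this.1
    have hKne : K.Nonempty := by
      have hne : {v | v ∈ K ∧ G.Adj u v}.ncard ≠ 0 := by
        intro h0
        have h2 : Odd (0 : ℕ) := by
          rw [show u ∈ oddN G K ↔ Odd {v | v ∈ K ∧ G.Adj u v}.ncard from Iff.rfl, h0] at huodd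
          exact huodd
        have h3 := Nat.odd_iff.mp h2
        omega
      obtain ⟨v, hv⟩ := Set.nonempty_of_ncard_ne_zero hne
      exact ⟨v, hv.1⟩
    set g' := Function.update g u K with hg'
    set r : V → ℕ := fun w => if w = u then 1 else rk lt w with hr
    have hrle : ∀ w, r w ≤ rk lt w := by
      intro w
      rcases eq_or_ne u w with rfl | hw
      · simp only [hr, if_pos rfl]; omega
      · simp [hr, Ne.symm hw]
    have hflow : IsGFlow G I O g' (fun a b => r b < r a) := by
      refine ⟨rankOrder_spo r, ?_, ?_, ?_, ?_⟩
      · intro i hiO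
        rcases eq_or_ne u i with rfl | hi
        · rw [hg', Function.update_self]
          refine ⟨hKne, Set.eq_empty_iff_forall_notMem.mpr ?_⟩
          intro x hx
          exact (hKsub hx.1).2 hx.2
        · rw [hg', Function.update_of_ne (Ne.symm hi)]; exact hg1 i hiO
      · intro i hiO j hj
        rcases eq_or_ne u i with rfl | hi
        · rw [hg', Function.update_self] at hj
          have hjO : j ∈ O := (hKsub hj).1
          have hju : j ≠ u := fun he => huO (he ▸ hjO)
          have := hrkO j hjO
          simp only [hr, if_neg hju, if_pos rfl]
          omega
        · rw [hg', Function.update_of_ne (Ne.symm hi)] at hj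
          have hltk := rk_lt_of_lt hspo (hg2 i hiO j hj)
          rcases eq_or_ne u j with rfl | hj'
          · simp only [hr, if_pos rfl, if_neg (Ne.symm hi)]; omega
          · simp only [hr, if_neg (Ne.symm hj'), if_neg (Ne.symm hi)]; omega
      · intro i hiO j hjodd
        rcases eq_or_ne u i with rfl | hi
        · rw [hg', Function.update_self] at hjodd
          by_cases hjO : j ∈ O
          · refine Or.inr ?_
            have hju : j ≠ u := fun he => huO (he ▸ hjO)
            have := hrkO j hjO
            simp only [hr, if_neg hju, if_pos rfl]
            omega
          · left
            have hmem : j ∈ oddN G K ∩ Oᶜ := ⟨hjodd, hjO⟩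
            rw [hKodd] at hmem
            exact hmem
        · rw [hg', Function.update_of_ne (Ne.symm hi)] at hjodd
          rcases hg3 i hiO j hjodd with he | hlt
          · exact Or.inl he
          · refine Or.inr ?_
            have hltk := rk_lt_of_lt hspo hlt
            rcases eq_or_ne u j with rfl | hj'
            · simp only [hr, if_pos rfl, if_neg (Ne.symm hi)]; omega
            · simp only [hr, if_neg (Ne.symm hj'), if_neg (Ne.symm hi)]; omega
      · intro i hiO
        rcases eq_or_ne u i with rfl | hi
        · rw [hg', Function.update_self]; exact huodd
        · rw [hg', Function.update_of_ne (Ne.symm hi)]; exact hg4 i hiO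
    exact hmax g' _ hflow
      (moreDelayed_of_rank hspo r hrle u 1 (by simp [hr]) (by omega))
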